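/- Let A, B, C be real numbers with A > 0, C > 0 and B ≠ 0. Then the functions ξ(τ) = −2AB²τ/(ACB²τ² + 1) and η(τ) = 2B/(ACB²τ² + 1) satisfy ξ' = −A (η − B) η and η' = C ξ η on all of ℝ, satisfy A (η(τ) − B)² + C ξ(τ)² = AB² for all τ, and (ξ(τ), η(τ)) → (0, 0) as τ → +∞ and as τ → −∞. -/

import Mathlib

open Filter Topology

/-- The explicit rational solution of the normal-form system `ξ' = −A(η − B)η`, `η' = Cξη`
on the critical level `G = AB²`, homoclinic to the equilibrium `(0, 0)`. -/
theorem normal_form_homoclinic_solution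
    (A B C : ℝ)
    (hA : 0 < A) (hC : 0 < C) (hB : B ≠ 0)
    (ξ η : ℝ → ℝ)
    (hξ : ξ = fun τ : ℝ => -2 * A * B ^ 2 * τ / (A * C * B ^ 2 * τ ^ 2 + 1))
    (hη : η = fun τ : ℝ => 2 * B / (A * C * B ^ 2 * τ ^ 2 + 1)) :
    (∀ τ : ℝ, HasDerivAt ξ (-A * (η τ - B) * η τ) τ ∧ HasDerivAt η (C * ξ τ * η τ) τ) ∧
    (∀ τ : ℝ, A * (η τ - B) ^ 2 + C * (ξ τ) ^ 2 = A * B ^ 2) ∧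
    Tendsto (fun τ : ℝ => (ξ τ, η τ)) atTop (𝓝 (0, 0)) ∧
    Tendsto (fun τ : ℝ => (ξ τ, η τ)) atBot (𝓝 (0, 0)) := by
  have hk : 0 < A * C * B ^ 2 := by positivity
  have hden : ∀ τ : ℝ, 0 < A * C * B ^ 2 * τ ^ 2 + 1 := fun τ => by positivity
  have hden' : ∀ τ : ℝ, A * C * B ^ 2 * τ ^ 2 + 1 ≠ 0 := fun τ => (hden τ).ne'
  subst hξ hη
  -- derivative of the denominator
  have hDerD : ∀ τ : ℝ, HasDerivAt (fun τ : ℝ => A * C * B ^ 2 * τ ^ 2 + 1)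
      (A * C * B ^ 2 * (2 * τ)) τ := by
    intro τ
    simpa using ((hasDerivAt_pow 2 τ).const_mul (A * C * B ^ 2)).add_const 1
  -- tendsto of ξ at atTop
  have hξtop : Tendsto (fun τ : ℝ => -2 * A * B ^ 2 * τ / (A * C * B ^ 2 * τ ^ 2 + 1))
      atTop (𝓝 0) := by
    have hg : Tendsto (fun τ : ℝ => A * C * B ^ 2 * τ + τ⁻¹) atTop atTop := by
      refine Tendsto.atTop_add_zero_eventuallyLE ((tendsto_id.const_mul_atTop hk)) ?_
      filter_upwards [eventually_gt_atTop (0 : ℝ)] with τ hτ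
      simp only [Pi.zero_apply]
      positivity
    have h0 : Tendsto (fun τ : ℝ => (-2 * A * B ^ 2) / (A * C * B ^ 2 * τ + τ⁻¹))
        atTop (𝓝 0) := tendsto_const_nhds.div_atTop hg
    refine h0.congr' ?_
    filter_upwards [eventually_gt_atTop (0 : ℝ)] with τ hτ
    field_simp
  -- tendsto of η at atTop
  have hDtop : Tendsto (fun τ : ℝ => A * C * B ^ 2 * τ ^ 2 + 1) atTop atTop := by
    refine tendsto_atTop_add_const_right _ 1 ?_
    exact (tendsto_pow_atTop two_ne_zero).const_mul_atTop hk
  have hηtop : Tendsto (fun τ : ℝ => 2 * B / (A * C * B ^ 2 * τ ^ 2 + 1)) atTop (𝓝 0) :=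
    tendsto_const_nhds.div_atTop hDtop
  -- atBot versions by symmetry τ ↦ -τ
  have hξbot : Tendsto (fun τ : ℝ => -2 * A * B ^ 2 * τ / (A * C * B ^ 2 * τ ^ 2 + 1))
      atBot (𝓝 0) := by
    have := (hξtop.neg).comp tendsto_neg_atBot_atTop
    simp only [neg_zero] at this
    refine this.congr fun τ => ?_
    simp only [Function.comp]
    ring
  have hηbot : Tendsto (fun τ : ℝ => 2 * B / (A * C * B ^ 2 * τ ^ 2 + 1)) atBot (𝓝 0) := by
    have := hηtop.comp tendsto_neg_atBot_atTop
    refine this.congr fun τ => ?_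
    simp only [Function.comp]
    ring_nf
  refine ⟨fun τ => ⟨?_, ?_⟩, fun τ => ?_, ?_, ?_⟩
  · -- ξ' = -A(η - B)η
    have h1 := (hasDerivAt_id τ).const_mul (-2 * A * B ^ 2)
    rw [mul_one] at h1
    have h := h1.div (hDerD τ) (hden' τ)
    simp only [id] at h
    refine h.congr_deriv ?_
    have := hden' τ
    field_simp
    ring
  · -- η' = Cξη
    have h1 : HasDerivAt (fun _ : ℝ => (2 * B : ℝ)) 0 τ := hasDerivAt_const τ (2 * B)
    have h := h1.div (hDerD τ) (hden' τ)
    refine h.congr_deriv ?_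
    have := hden' τ
    field_simp
    ring
  · -- first integral
    have := hden' τ
    field_simp
    ring
  · exact hξtop.prodMk_nhds hηtop
  · exact hξbot.prodMk_nhds hηbot
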